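/- Let (fₙ) be a sequence of functions from a metric space X to a normed space E that are pairwise disjoint (for each x ∈ X and m ≠ n, fₘ(x) = 0 or fₙ(x) = 0). Suppose there is a function σ : [0,∞) → [0,∞] with ω_{fₙ} ≤ σ for all n, and suppose the pointwise sum f(x) = Σₙ fₙ(x) is well-defined (for each x, at most one term is nonzero, or the sum converges). Then ω_f ≤ 2σ. -/

import Mathlib

open ENNReal

/-- Modulus of continuity: ω_f(ε) = sup{‖f x₁ - f x₂‖ : dist x₁ x₂ ≤ ε}, valued in [0,∞]. -/
noncomputable def modulus {X E : Type*} [PseudoMetricSpace X] [NormedAddCommGroup E]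
    (f : X → E) (ε : ℝ) : ℝ≥0∞ :=
  ⨆ (p : X × X) (_ : dist p.1 p.2 ≤ ε), (‖f p.1 - f p.2‖₊ : ℝ≥0∞)

theorem stmt4 {X E : Type*} [MetricSpace X] [NormedAddCommGroup E]
    (fN : ℕ → X → E)
    (hdisj : ∀ x : X, ∀ m n : ℕ, m ≠ n → fN m x = 0 ∨ fN n x = 0)
    (σ : ℝ → ℝ≥0∞) (hσ : ∀ n ε, modulus (fN n) ε ≤ σ ε)
    (f : X → E) (hf : ∀ x, HasSum (fun n => fN n x) (f x)) :
    ∀ ε : ℝ, modulus f ε ≤ 2 * σ ε := by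
  have key : ∀ x : X, ∃ n : ℕ, f x = fN n x ∧ ∀ m, m ≠ n → fN m x = 0 := by
    intro x
    by_cases h : ∀ n, fN n x = 0
    · refine ⟨0, ?_, fun m _ => h m⟩
      exact (hf x).unique (by simpa [h] using (hasSum_zero : HasSum (fun _ : ℕ => (0:E)) 0))
    · push_neg at h
      obtain ⟨n, hn⟩ := h
      have hm : ∀ m, m ≠ n → fN m x = 0 := fun m hmn =>
        (hdisj x m n hmn).resolve_right hn
      exact ⟨n, (hf x).unique (hasSum_single (f := fun m => fN m x) n (fun m hmn => hm m hmn)), hm⟩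
  intro ε
  refine iSup₂_le fun p hp => ?_
  obtain ⟨n₁, h1, h1'⟩ := key p.1
  obtain ⟨n₂, h2, h2'⟩ := key p.2
  have bound : ∀ n, (‖fN n p.1 - fN n p.2‖₊ : ℝ≥0∞) ≤ σ ε := fun n =>
    le_trans (le_iSup₂ (f := fun (q : X × X) (_ : dist q.1 q.2 ≤ ε) =>
      (‖fN n q.1 - fN n q.2‖₊ : ℝ≥0∞)) p hp) (hσ n ε)
  by_cases hnn : n₁ = n₂
  · rw [h1, h2, hnn]
    calc (‖fN n₂ p.1 - fN n₂ p.2‖₊ : ℝ≥0∞) ≤ σ ε := bound n₂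
      _ ≤ 2 * σ ε := le_mul_of_one_le_left zero_le one_le_two
  · have e1 : fN n₁ p.2 = 0 := h2' n₁ hnn
    have e2 : fN n₂ p.1 = 0 := h1' n₂ (Ne.symm hnn)
    have heq : f p.1 - f p.2 = (fN n₁ p.1 - fN n₁ p.2) + (fN n₂ p.1 - fN n₂ p.2) := by
      rw [h1, h2, e1, e2]; abel
    rw [heq]
    calc (‖(fN n₁ p.1 - fN n₁ p.2) + (fN n₂ p.1 - fN n₂ p.2)‖₊ : ℝ≥0∞)
        ≤ (‖fN n₁ p.1 - fN n₁ p.2‖₊ : ℝ≥0∞) + ‖fN n₂ p.1 - fN n₂ p.2‖₊ := by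
          exact_mod_cast nnnorm_add_le _ _
      _ ≤ σ ε + σ ε := add_le_add (bound n₁) (bound n₂)
      _ = 2 * σ ε := (two_mul _).symm
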